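/- The set C_r = {G ∈ ℝ^{p×m} : ‖G‖_* ≤ r, ‖G‖_op ≤ 1} is the convex hull of the set O_r = {AB' : A ∈ O(p,r), B ∈ O(m,r)} of products of p×r and m×r matrices with orthonormal columns, provided r ≤ min(p,m). -/

import Mathlib

open Matrix Real

/-- Vector of singular values of a real matrix. -/
noncomputable def singVals {p m : ℕ} (A : Matrix (Fin p) (Fin m) ℝ) : Fin m → ℝ :=
  fun i => Real.sqrt ((show (Aᵀ * A).IsHermitian by
    rw [Matrix.IsHermitian, Matrix.conjTranspose_eq_transpose_of_trivial, Matrix.transpose_mul,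
      Matrix.transpose_transpose]).eigenvalues i)

/-- Operator (spectral) norm: largest singular value. -/
noncomputable def opNorm {p m : ℕ} (A : Matrix (Fin p) (Fin m) ℝ) : ℝ :=
  ⨆ i, singVals A i

/-- Nuclear norm: sum of singular values. -/
noncomputable def nucNorm {p m : ℕ} (A : Matrix (Fin p) (Fin m) ℝ) : ℝ :=
  ∑ i, singVals A i

namespace Stmt14

lemma hermT {p m : ℕ} (A : Matrix (Fin p) (Fin m) ℝ) : (Aᵀ * A).IsHermitian := by
  rw [Matrix.IsHermitian, Matrix.conjTranspose_eq_transpose_of_trivial, Matrix.transpose_mul,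
    Matrix.transpose_transpose]

/-- inner product on EuclideanSpace as dotProduct -/
lemma inner_eq_dot {n : ℕ} (x y : EuclideanSpace ℝ (Fin n)) :
    (inner ℝ x y : ℝ) = ⇑x ⬝ᵥ ⇑y := by
  simp [PiLp.inner_apply, dotProduct, mul_comm]

variable {p m : ℕ} (H : Matrix (Fin p) (Fin m) ℝ)


/-- right singular vectors -/
noncomputable def V (i : Fin m) : Fin m → ℝ :=
  ⇑((hermT H).eigenvectorBasis i)

/-- left singular vectors (junk when σ i = 0) -/
noncomputable def U (i : Fin m) : Fin p → ℝ :=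
  (singVals H i)⁻¹ • (H *ᵥ V H i)

lemma sv_nonneg (i : Fin m) : 0 ≤ singVals H i := Real.sqrt_nonneg _

lemma sq_sv (i : Fin m) :
    singVals H i ^ 2 = (hermT H).eigenvalues i :=
  Real.sq_sqrt (Matrix.eigenvalues_conjTranspose_mul_self_nonneg H i)

lemma V_dot (i j : Fin m) : V H i ⬝ᵥ V H j = if i = j then 1 else 0 := by
  have h := orthonormal_iff_ite.mp
    ((hermT H).eigenvectorBasis).orthonormal i j
  rw [inner_eq_dot] at h
  simpa [V] using h

lemma HV_dot (i j : Fin m) :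
    (H *ᵥ V H i) ⬝ᵥ (H *ᵥ V H j) = if i = j then singVals H i * singVals H j else 0 := by
  have h1 : (H *ᵥ V H i) ⬝ᵥ (H *ᵥ V H j) = ((Hᴴ * H) *ᵥ V H i) ⬝ᵥ V H j := by
    rw [Matrix.conjTranspose_eq_transpose_of_trivial,
      Matrix.dotProduct_mulVec, ← Matrix.mulVec_transpose, ← Matrix.mulVec_mulVec]
  have h2 : (Hᴴ * H) *ᵥ V H i
      = (hermT H).eigenvalues i • V H i :=
    (hermT H).mulVec_eigenvectorBasis i
  rw [h1, h2, smul_dotProduct, V_dot]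
  rcases eq_or_ne i j with rfl | hij
  · simp [← sq_sv, sq]
  · simp [hij]

lemma HV_eq_zero {i : Fin m} (h : singVals H i = 0) : H *ᵥ V H i = 0 := by
  have := HV_dot H i i
  rw [if_pos rfl, h, mul_zero] at this
  exact dotProduct_self_eq_zero.mp this

lemma HV_eq (i : Fin m) : H *ᵥ V H i = singVals H i • U H i := by
  rcases eq_or_ne (singVals H i) 0 with h | h
  · rw [h, HV_eq_zero H h, zero_smul]
  · rw [U, smul_smul, mul_inv_cancel₀ h, one_smul]

lemma U_dot {i j : Fin m} (hi : singVals H i ≠ 0) (hj : singVals H j ≠ 0) :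
    U H i ⬝ᵥ U H j = if i = j then 1 else 0 := by
  rw [U, U, smul_dotProduct, dotProduct_smul, HV_dot]
  rcases eq_or_ne i j with rfl | hij
  · simp [smul_eq_mul]
    field_simp
  · simp [hij]

lemma H_eq : H = ∑ i, singVals H i • Matrix.vecMulVec (U H i) (V H i) := by
  ext j k
  have hrow := ((hermT H).eigenvectorBasis).sum_repr'
    ((WithLp.equiv 2 _).symm (H j))
  have hL := congrArg (WithLp.linearEquiv 2 ℝ (Fin m → ℝ)) hrow
  simp only [map_sum, _root_.map_smul] at hL
  have : ∀ i, (inner ℝ ((hermT H).eigenvectorBasis i)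
      ((WithLp.equiv 2 (Fin m → ℝ)).symm (H j)) : ℝ) = (H *ᵥ V H i) j := by
    intro i
    rw [inner_eq_dot]
    simp [V, Matrix.mulVec, dotProduct, mul_comm]
  simp only [this] at hL
  have hL' : ∑ i, (H *ᵥ V H i) j • V H i = H j := hL
  have hk := congrFun hL' k
  rw [Finset.sum_apply] at hk
  calc H j k = ∑ i, (H *ᵥ V H i) j * V H i k := by
        rw [← hk]; rfl
    _ = _ := by
        simp only [HV_eq, Matrix.sum_apply, Matrix.smul_apply, Matrix.vecMulVec_apply,
          Pi.smul_apply, smul_eq_mul]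
        exact Finset.sum_congr rfl fun i _ => by ring


lemma sum_dot {n : ℕ} {ι : Type*} (s : Finset ι) (f : ι → Fin n → ℝ) (x : Fin n → ℝ) :
    (∑ i ∈ s, f i) ⬝ᵥ x = ∑ i ∈ s, f i ⬝ᵥ x := by
  simp only [dotProduct, Finset.sum_apply, Finset.sum_mul]
  rw [Finset.sum_comm]

lemma dot_sum {n : ℕ} {ι : Type*} (s : Finset ι) (x : Fin n → ℝ) (f : ι → Fin n → ℝ) :
    x ⬝ᵥ (∑ i ∈ s, f i) = ∑ i ∈ s, x ⬝ᵥ f i := by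
  simp only [dotProduct, Finset.sum_apply, Finset.mul_sum]
  rw [Finset.sum_comm]

lemma dot_self_nonneg {n : ℕ} (x : Fin n → ℝ) : 0 ≤ x ⬝ᵥ x :=
  Finset.sum_nonneg fun k _ => mul_self_nonneg _

/-- Bessel's inequality, dot-product form. -/
lemma dot_bessel {n : ℕ} {ι : Type*} [DecidableEq ι] (s : Finset ι) (w : ι → Fin n → ℝ)
    (hw : ∀ i ∈ s, ∀ j ∈ s, w i ⬝ᵥ w j = if i = j then 1 else 0) (x : Fin n → ℝ) :
    ∑ i ∈ s, (w i ⬝ᵥ x) ^ 2 ≤ x ⬝ᵥ x := by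
  set y : Fin n → ℝ := x - ∑ i ∈ s, (w i ⬝ᵥ x) • w i with hy
  have h0 : 0 ≤ y ⬝ᵥ y := Finset.sum_nonneg fun k _ => mul_self_nonneg _
  have hexp : y ⬝ᵥ y = x ⬝ᵥ x - ∑ i ∈ s, (w i ⬝ᵥ x) ^ 2 := by
    have h1 : (∑ i ∈ s, (w i ⬝ᵥ x) • w i) ⬝ᵥ x = ∑ i ∈ s, (w i ⬝ᵥ x) ^ 2 := by
      rw [sum_dot]
      exact Finset.sum_congr rfl fun i _ => by rw [smul_dotProduct, smul_eq_mul]; ring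
    have h2 : x ⬝ᵥ (∑ i ∈ s, (w i ⬝ᵥ x) • w i) = ∑ i ∈ s, (w i ⬝ᵥ x) ^ 2 := by
      rw [dotProduct_comm]; exact h1
    have h3 : (∑ i ∈ s, (w i ⬝ᵥ x) • w i) ⬝ᵥ (∑ j ∈ s, (w j ⬝ᵥ x) • w j)
        = ∑ i ∈ s, (w i ⬝ᵥ x) ^ 2 := by
      rw [sum_dot]
      refine Finset.sum_congr rfl fun i hi => ?_
      rw [smul_dotProduct, dot_sum]
      have : ∀ j ∈ s, w i ⬝ᵥ (w j ⬝ᵥ x) • w j = if j = i then (w i ⬝ᵥ x) else 0 := by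
        intro j hj
        rw [dotProduct_smul, hw i hi j hj]
        rcases eq_or_ne i j with rfl | hij
        · simp
        · simp [hij, Ne.symm hij]
      rw [Finset.sum_congr rfl this, Finset.sum_ite_eq' s i, if_pos hi, smul_eq_mul]
      ring
    rw [hy, sub_dotProduct, dotProduct_sub, dotProduct_sub, h1, h2, h3]
    ring
  linarith [hexp ▸ h0]

/-- Cauchy–Schwarz with square roots over ℝ. -/
lemma sum_mul_le_sqrt {ι : Type*} (s : Finset ι) (a b : ι → ℝ) (ha : ∀ i ∈ s, 0 ≤ a i)
    (hb : ∀ i ∈ s, 0 ≤ b i) :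
    ∑ i ∈ s, a i * b i ≤ Real.sqrt (∑ i ∈ s, a i ^ 2) * Real.sqrt (∑ i ∈ s, b i ^ 2) := by
  have h := Finset.sum_mul_sq_le_sq_mul_sq s a b
  have hnn : 0 ≤ ∑ i ∈ s, a i * b i :=
    Finset.sum_nonneg fun i hi => mul_nonneg (ha i hi) (hb i hi)
  calc ∑ i ∈ s, a i * b i = Real.sqrt ((∑ i ∈ s, a i * b i) ^ 2) := (Real.sqrt_sq hnn).symm
    _ ≤ Real.sqrt ((∑ i ∈ s, a i ^ 2) * (∑ i ∈ s, b i ^ 2)) := Real.sqrt_le_sqrt h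
    _ = _ := Real.sqrt_mul (Finset.sum_nonneg fun i _ => sq_nonneg _) _

/-- columns of a matrix with `BᵀB = 1` are orthonormal w.r.t. dot product -/
lemma cols_orthonormal {m r : ℕ} {B : Matrix (Fin m) (Fin r) ℝ} (hB : Bᵀ * B = 1)
    (t t' : Fin r) : (fun i => B i t) ⬝ᵥ (fun i => B i t') = if t = t' then 1 else 0 := by
  have := congrFun (congrFun hB t) t'
  simpa [Matrix.mul_apply, dotProduct, Matrix.one_apply] using this

/-- key bilinear bound: for orthonormal families u, v (on s) and G = A Bᵀ ∈ O_r,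
   ∑_{i∈s} uᵢᵀ G vᵢ ≤ r. -/
lemma sum_bilinear_le {p m r : ℕ} {ι : Type*} [DecidableEq ι] (s : Finset ι)
    (u : ι → Fin p → ℝ) (v : ι → Fin m → ℝ)
    (hu : ∀ i ∈ s, ∀ j ∈ s, u i ⬝ᵥ u j = if i = j then 1 else 0)
    (hv : ∀ i ∈ s, ∀ j ∈ s, v i ⬝ᵥ v j = if i = j then 1 else 0)
    {A : Matrix (Fin p) (Fin r) ℝ} {B : Matrix (Fin m) (Fin r) ℝ}
    (hA : Aᵀ * A = 1) (hB : Bᵀ * B = 1) :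
    ∑ i ∈ s, u i ⬝ᵥ ((A * Bᵀ) *ᵥ v i) ≤ (r : ℝ) := by
  have hterm : ∀ i, u i ⬝ᵥ ((A * Bᵀ) *ᵥ v i) = (Aᵀ *ᵥ u i) ⬝ᵥ (Bᵀ *ᵥ v i) := by
    intro i
    rw [← Matrix.mulVec_mulVec, Matrix.dotProduct_mulVec, ← Matrix.mulVec_transpose]
  have hCS : ∀ i, (Aᵀ *ᵥ u i) ⬝ᵥ (Bᵀ *ᵥ v i)
      ≤ Real.sqrt ((Aᵀ *ᵥ u i) ⬝ᵥ (Aᵀ *ᵥ u i)) * Real.sqrt ((Bᵀ *ᵥ v i) ⬝ᵥ (Bᵀ *ᵥ v i)) := by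
    intro i
    have h := Finset.sum_mul_sq_le_sq_mul_sq Finset.univ (Aᵀ *ᵥ u i) (Bᵀ *ᵥ v i)
    have h2 : (Aᵀ *ᵥ u i) ⬝ᵥ (Bᵀ *ᵥ v i) ≤ |(Aᵀ *ᵥ u i) ⬝ᵥ (Bᵀ *ᵥ v i)| := le_abs_self _
    calc (Aᵀ *ᵥ u i) ⬝ᵥ (Bᵀ *ᵥ v i) ≤ |(Aᵀ *ᵥ u i) ⬝ᵥ (Bᵀ *ᵥ v i)| := h2
      _ = Real.sqrt (((Aᵀ *ᵥ u i) ⬝ᵥ (Bᵀ *ᵥ v i)) ^ 2) := (Real.sqrt_sq_eq_abs _).symm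
      _ ≤ Real.sqrt (((Aᵀ *ᵥ u i) ⬝ᵥ (Aᵀ *ᵥ u i)) * ((Bᵀ *ᵥ v i) ⬝ᵥ (Bᵀ *ᵥ v i))) := by
          apply Real.sqrt_le_sqrt
          have e1 : (Aᵀ *ᵥ u i) ⬝ᵥ (Aᵀ *ᵥ u i) = ∑ t, ((Aᵀ *ᵥ u i) t) ^ 2 := by
            simp [dotProduct, sq]
          have e2 : (Bᵀ *ᵥ v i) ⬝ᵥ (Bᵀ *ᵥ v i) = ∑ t, ((Bᵀ *ᵥ v i) t) ^ 2 := by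
            simp [dotProduct, sq]
          have e3 : (Aᵀ *ᵥ u i) ⬝ᵥ (Bᵀ *ᵥ v i) = ∑ t, (Aᵀ *ᵥ u i) t * (Bᵀ *ᵥ v i) t := rfl
          rw [e1, e2, e3]
          exact h
      _ = _ := Real.sqrt_mul (dot_self_nonneg _) _
  have hAsum : ∑ i ∈ s, (Aᵀ *ᵥ u i) ⬝ᵥ (Aᵀ *ᵥ u i) ≤ (r : ℝ) := by
    have expand : ∀ i, (Aᵀ *ᵥ u i) ⬝ᵥ (Aᵀ *ᵥ u i) = ∑ t, ((fun j => A j t) ⬝ᵥ u i) ^ 2 := by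
      intro i
      simp only [dotProduct, Matrix.mulVec, Matrix.transpose_apply, sq]
    calc ∑ i ∈ s, (Aᵀ *ᵥ u i) ⬝ᵥ (Aᵀ *ᵥ u i)
        = ∑ t : Fin r, ∑ i ∈ s, (u i ⬝ᵥ (fun j => A j t)) ^ 2 := by
          rw [Finset.sum_congr rfl fun i _ => expand i, Finset.sum_comm]
          exact Finset.sum_congr rfl fun t _ => Finset.sum_congr rfl fun i _ => by
            rw [dotProduct_comm]
      _ ≤ ∑ t : Fin r, (fun j => A j t) ⬝ᵥ (fun j => A j t) :=
          Finset.sum_le_sum fun t _ => dot_bessel s u hu _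
      _ = (r : ℝ) := by simp [cols_orthonormal hA]
  have hBsum : ∑ i ∈ s, (Bᵀ *ᵥ v i) ⬝ᵥ (Bᵀ *ᵥ v i) ≤ (r : ℝ) := by
    have expand : ∀ i, (Bᵀ *ᵥ v i) ⬝ᵥ (Bᵀ *ᵥ v i) = ∑ t, ((fun j => B j t) ⬝ᵥ v i) ^ 2 := by
      intro i
      simp only [dotProduct, Matrix.mulVec, Matrix.transpose_apply, sq]
    calc ∑ i ∈ s, (Bᵀ *ᵥ v i) ⬝ᵥ (Bᵀ *ᵥ v i)
        = ∑ t : Fin r, ∑ i ∈ s, (v i ⬝ᵥ (fun j => B j t)) ^ 2 := by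
          rw [Finset.sum_congr rfl fun i _ => expand i, Finset.sum_comm]
          exact Finset.sum_congr rfl fun t _ => Finset.sum_congr rfl fun i _ => by
            rw [dotProduct_comm]
      _ ≤ ∑ t : Fin r, (fun j => B j t) ⬝ᵥ (fun j => B j t) :=
          Finset.sum_le_sum fun t _ => dot_bessel s v hv _
      _ = (r : ℝ) := by simp [cols_orthonormal hB]
  calc ∑ i ∈ s, u i ⬝ᵥ ((A * Bᵀ) *ᵥ v i)
      = ∑ i ∈ s, (Aᵀ *ᵥ u i) ⬝ᵥ (Bᵀ *ᵥ v i) := Finset.sum_congr rfl fun i _ => hterm i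
    _ ≤ ∑ i ∈ s, Real.sqrt ((Aᵀ *ᵥ u i) ⬝ᵥ (Aᵀ *ᵥ u i)) * Real.sqrt ((Bᵀ *ᵥ v i) ⬝ᵥ (Bᵀ *ᵥ v i)) :=
        Finset.sum_le_sum fun i _ => hCS i
    _ ≤ Real.sqrt (∑ i ∈ s, Real.sqrt ((Aᵀ *ᵥ u i) ⬝ᵥ (Aᵀ *ᵥ u i)) ^ 2)
        * Real.sqrt (∑ i ∈ s, Real.sqrt ((Bᵀ *ᵥ v i) ⬝ᵥ (Bᵀ *ᵥ v i)) ^ 2) :=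
        sum_mul_le_sqrt s _ _ (fun i _ => Real.sqrt_nonneg _) (fun i _ => Real.sqrt_nonneg _)
    _ = Real.sqrt (∑ i ∈ s, (Aᵀ *ᵥ u i) ⬝ᵥ (Aᵀ *ᵥ u i))
        * Real.sqrt (∑ i ∈ s, (Bᵀ *ᵥ v i) ⬝ᵥ (Bᵀ *ᵥ v i)) := by
        rw [Finset.sum_congr rfl fun i _ => Real.sq_sqrt (dot_self_nonneg _),
          Finset.sum_congr rfl fun i _ => Real.sq_sqrt (dot_self_nonneg _)]
    _ ≤ Real.sqrt r * Real.sqrt r := by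
        gcongr
    _ = (r : ℝ) := Real.mul_self_sqrt (Nat.cast_nonneg r)

section Part3
variable {n : ℕ}

noncomputable def enorm (x : Fin n → ℝ) : ℝ :=
  ‖(WithLp.linearEquiv 2 ℝ (Fin n → ℝ)).symm x‖

lemma enorm_sq (x : Fin n → ℝ) : enorm x ^ 2 = x ⬝ᵥ x := by
  rw [enorm, ← real_inner_self_eq_norm_sq, inner_eq_dot]
  rfl

lemma enorm_nonneg (x : Fin n → ℝ) : 0 ≤ enorm x := norm_nonneg _

lemma enorm_le {n' : ℕ} (x : Fin n → ℝ) (y : Fin n' → ℝ) (h : x ⬝ᵥ x ≤ y ⬝ᵥ y) :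
    enorm x ≤ enorm y := by
  have := Real.sqrt_le_sqrt ((enorm_sq x).symm ▸ (enorm_sq y).symm ▸ h)
  rwa [Real.sqrt_sq (enorm_nonneg x), Real.sqrt_sq (enorm_nonneg y)] at this

lemma enorm_sum_le {ι : Type*} (s : Finset ι) (f : ι → Fin n → ℝ) :
    enorm (∑ i ∈ s, f i) ≤ ∑ i ∈ s, enorm (f i) := by
  simp only [enorm, map_sum]
  exact norm_sum_le _ _

lemma enorm_smul (c : ℝ) (x : Fin n → ℝ) : enorm (c • x) = |c| * enorm x := by
  simp only [enorm, _root_.map_smul, norm_smul, Real.norm_eq_abs]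

end Part3

section Part4
variable {p m r : ℕ}

/-- contraction property of elements of O_r -/
lemma contraction_of_mem {A : Matrix (Fin p) (Fin r) ℝ} {B : Matrix (Fin m) (Fin r) ℝ}
    (hA : Aᵀ * A = 1) (hB : Bᵀ * B = 1) (x : Fin m → ℝ) :
    enorm ((A * Bᵀ) *ᵥ x) ≤ enorm x := by
  apply enorm_le
  have h1 : ((A * Bᵀ) *ᵥ x) ⬝ᵥ ((A * Bᵀ) *ᵥ x) = (Bᵀ *ᵥ x) ⬝ᵥ (Bᵀ *ᵥ x) := by
    rw [← Matrix.mulVec_mulVec]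
    rw [Matrix.dotProduct_mulVec (A *ᵥ Bᵀ *ᵥ x) A (Bᵀ *ᵥ x), ← Matrix.mulVec_transpose,
      Matrix.mulVec_mulVec, hA, Matrix.one_mulVec]
  rw [h1]
  have h2 : (Bᵀ *ᵥ x) ⬝ᵥ (Bᵀ *ᵥ x) = ∑ t, ((fun j => B j t) ⬝ᵥ x) ^ 2 := by
    simp only [dotProduct, Matrix.mulVec, Matrix.transpose_apply, sq]
  rw [h2]
  exact dot_bessel Finset.univ (fun t => fun j => B j t)
    (fun t _ t' _ => cols_orthonormal hB t t') x

variable (H : Matrix (Fin p) (Fin m) ℝ)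

lemma sum_smul_mulVec {ι : Type*} (t : Finset ι) (w : ι → ℝ)
    (g : ι → Matrix (Fin p) (Fin m) ℝ) (x : Fin m → ℝ) :
    (∑ k ∈ t, w k • g k) *ᵥ x = ∑ k ∈ t, w k • (g k *ᵥ x) := by
  ext j
  simp only [Matrix.mulVec, dotProduct, Finset.sum_apply, Matrix.sum_apply,
    Matrix.smul_apply, Pi.smul_apply, smul_eq_mul, Finset.sum_mul, Finset.mul_sum]
  rw [Finset.sum_comm]
  exact Finset.sum_congr rfl fun k _ => Finset.sum_congr rfl fun i _ => by ring

/-- any coordinate singular value bounded by 1 under contraction -/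
lemma sv_le_one_of_contraction (hc : ∀ x, enorm (H *ᵥ x) ≤ enorm x) (i : Fin m) :
    singVals H i ≤ 1 := by
  have h1 : (H *ᵥ V H i) ⬝ᵥ (H *ᵥ V H i) = singVals H i ^ 2 := by
    rw [HV_dot, if_pos rfl, sq]
  have h2 := hc (V H i)
  have h3 : enorm (V H i) ^ 2 = 1 := by rw [enorm_sq, V_dot, if_pos rfl]
  have h4 : enorm (H *ᵥ V H i) ^ 2 = singVals H i ^ 2 := by rw [enorm_sq, h1]
  have h5 : singVals H i ^ 2 ≤ 1 := by
    calc singVals H i ^ 2 = enorm (H *ᵥ V H i) ^ 2 := h4.symm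
      _ ≤ enorm (V H i) ^ 2 := by
          apply pow_le_pow_left₀ (enorm_nonneg _) h2
      _ = 1 := h3
  exact (pow_le_one_iff_of_nonneg (sv_nonneg H i) two_ne_zero).mp h5

/-- opNorm of a convex combination of O_r elements is ≤ 1 -/
lemma opNorm_le_of_combination {ι : Type*} (t : Finset ι) (w : ι → ℝ)
    (g : ι → Matrix (Fin p) (Fin m) ℝ)
    (hw0 : ∀ k ∈ t, 0 ≤ w k) (hw1 : ∑ k ∈ t, w k = 1)
    (hg : ∀ k ∈ t, ∃ (A : Matrix (Fin p) (Fin r) ℝ) (B : Matrix (Fin m) (Fin r) ℝ),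
      Aᵀ * A = 1 ∧ Bᵀ * B = 1 ∧ g k = A * Bᵀ)
    (hH : ∑ k ∈ t, w k • g k = H) :
    ∀ i, singVals H i ≤ 1 := by
  apply sv_le_one_of_contraction
  intro x
  rw [← hH, sum_smul_mulVec]
  calc enorm (∑ k ∈ t, w k • (g k *ᵥ x)) ≤ ∑ k ∈ t, enorm (w k • (g k *ᵥ x)) :=
        enorm_sum_le _ _
    _ ≤ ∑ k ∈ t, w k * enorm x := by
        apply Finset.sum_le_sum
        intro k hk
        rw [enorm_smul, abs_of_nonneg (hw0 k hk)]
        obtain ⟨A, B, hA, hB, hgk⟩ := hg k hk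
        exact mul_le_mul_of_nonneg_left (hgk ▸ contraction_of_mem hA hB x) (hw0 k hk)
    _ = enorm x := by rw [← Finset.sum_mul, hw1, one_mul]

/-- nucNorm of a convex combination of O_r elements is ≤ r -/
lemma nucNorm_le_of_combination {ι : Type*} (t : Finset ι) (w : ι → ℝ)
    (g : ι → Matrix (Fin p) (Fin m) ℝ)
    (hw0 : ∀ k ∈ t, 0 ≤ w k) (hw1 : ∑ k ∈ t, w k = 1)
    (hg : ∀ k ∈ t, ∃ (A : Matrix (Fin p) (Fin r) ℝ) (B : Matrix (Fin m) (Fin r) ℝ),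
      Aᵀ * A = 1 ∧ Bᵀ * B = 1 ∧ g k = A * Bᵀ)
    (hH : ∑ k ∈ t, w k • g k = H) :
    ∑ i, singVals H i ≤ (r : ℝ) := by
  classical
  set S : Finset (Fin m) := Finset.univ.filter (fun i => singVals H i ≠ 0) with hS
  have hsum : ∑ i, singVals H i = ∑ i ∈ S, singVals H i := by
    rw [hS]
    refine (Finset.sum_filter_of_ne ?_).symm
    intro i _ h
    exact h
  have hkey : ∀ i ∈ S, singVals H i = U H i ⬝ᵥ (H *ᵥ V H i) := by
    intro i hi
    have hne : singVals H i ≠ 0 := (Finset.mem_filter.mp hi).2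
    rw [HV_eq, dotProduct_smul, U_dot H hne hne, if_pos rfl, smul_eq_mul, mul_one]
  rw [hsum, Finset.sum_congr rfl hkey]
  have hHv : ∀ y, H *ᵥ y = ∑ k ∈ t, w k • (g k *ᵥ y) := fun y => by
    rw [← hH, sum_smul_mulVec]
  calc ∑ i ∈ S, U H i ⬝ᵥ (H *ᵥ V H i)
      = ∑ k ∈ t, w k * (∑ i ∈ S, U H i ⬝ᵥ (g k *ᵥ V H i)) := by
        rw [Finset.sum_congr rfl (fun i (_ : i ∈ S) => by rw [hHv (V H i), dot_sum])]
        rw [Finset.sum_comm]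
        refine Finset.sum_congr rfl fun k _ => ?_
        rw [Finset.mul_sum]
        exact Finset.sum_congr rfl fun i _ => by rw [dotProduct_smul, smul_eq_mul]
    _ ≤ ∑ k ∈ t, w k * (r : ℝ) := by
        refine Finset.sum_le_sum fun k hk => ?_
        obtain ⟨A, B, hA, hB, hgk⟩ := hg k hk
        refine mul_le_mul_of_nonneg_left ?_ (hw0 k hk)
        rw [hgk]
        exact sum_bilinear_le S (U H) (V H)
          (fun i hi j hj => U_dot H (Finset.mem_filter.mp hi).2 (Finset.mem_filter.mp hj).2)
          (fun i _ j _ => V_dot H i j) hA hB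
    _ = (r : ℝ) := by rw [← Finset.sum_mul, hw1, one_mul]

end Part4

section Polytope
variable {m r : ℕ}

def Vert (r : ℕ) (Z : Finset (Fin m)) : Set (Fin m → ℝ) :=
  {c : Fin m → ℝ | (∀ i, c i = 0 ∨ c i = 1) ∧ (∑ i, c i ≤ (r : ℝ)) ∧ ∀ i ∈ Z, c i = 0}

lemma polytope (Z : Finset (Fin m)) (N : ℕ) :
    ∀ (σ : Fin m → ℝ), (Finset.univ.filter fun i => σ i ≠ 0 ∧ σ i ≠ 1).card ≤ N →
    (∀ i, 0 ≤ σ i) → (∀ i, σ i ≤ 1) → (∑ i, σ i ≤ (r : ℝ)) → (∀ i ∈ Z, σ i = 0) →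
    σ ∈ convexHull ℝ (Vert r Z) := by
  induction N with
  | zero =>
    intro σ hcard h0 h1 hs hZ
    apply subset_convexHull
    refine ⟨fun i => ?_, hs, hZ⟩
    by_contra hn
    push_neg at hn
    have hi : i ∈ Finset.univ.filter fun i => σ i ≠ 0 ∧ σ i ≠ 1 :=
      Finset.mem_filter.mpr ⟨Finset.mem_univ i, hn⟩
    have := Finset.card_pos.mpr ⟨i, hi⟩
    omega
  | succ N ih =>
    intro σ hcard h0 h1 hs hZ
    by_cases hle : (Finset.univ.filter fun i => σ i ≠ 0 ∧ σ i ≠ 1).card ≤ N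
    · exact ih σ hle h0 h1 hs hZ
    have hne : (Finset.univ.filter fun i => σ i ≠ 0 ∧ σ i ≠ 1).Nonempty := by
      rw [← Finset.card_pos]; omega
    obtain ⟨i₀, hi₀⟩ := hne
    obtain ⟨hfrac0, hfrac1⟩ := (Finset.mem_filter.mp hi₀).2
    have hi₀Z : i₀ ∉ Z := fun h => hfrac0 (hZ i₀ h)
    have hpos : 0 < σ i₀ := lt_of_le_of_ne (h0 i₀) (Ne.symm hfrac0)
    have hlt1 : σ i₀ < 1 := lt_of_le_of_ne (h1 i₀) hfrac1
    by_cases hex : ∃ j ∈ Finset.univ.filter fun i => σ i ≠ 0 ∧ σ i ≠ 1, j ≠ i₀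
    · -- two fractional coordinates
      obtain ⟨j₀, hj₀, hji⟩ := hex
      obtain ⟨hjfrac0, hjfrac1⟩ := (Finset.mem_filter.mp hj₀).2
      have hj₀Z : j₀ ∉ Z := fun h => hjfrac0 (hZ j₀ h)
      have hjpos : 0 < σ j₀ := lt_of_le_of_ne (h0 j₀) (Ne.symm hjfrac0)
      have hjlt1 : σ j₀ < 1 := lt_of_le_of_ne (h1 j₀) hjfrac1
      set s := min (σ i₀) (1 - σ j₀) with hsdef
      set t := min (1 - σ i₀) (σ j₀) with htdef
      have hs0 : 0 < s := lt_min hpos (by linarith)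
      have ht0 : 0 < t := lt_min (by linarith) hjpos
      set σ' := Function.update (Function.update σ i₀ (σ i₀ + t)) j₀ (σ j₀ - t) with hσ'
      set σ'' := Function.update (Function.update σ i₀ (σ i₀ - s)) j₀ (σ j₀ + s) with hσ''
      have hij : i₀ ≠ j₀ := Ne.symm hji
      have hval' : ∀ i, σ' i = if i = j₀ then σ j₀ - t else if i = i₀ then σ i₀ + t else σ i := by
        intro i
        rcases eq_or_ne i j₀ with rfl | hij₀
        · simp [hσ']
        rcases eq_or_ne i i₀ with rfl | hii₀
        · simp [hσ', hij₀, Function.update_of_ne hij₀, hij]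
        · simp only [hσ', Function.update_of_ne hij₀, Function.update_of_ne hii₀,
            if_neg hij₀, if_neg hii₀]
      have hval'' : ∀ i, σ'' i = if i = j₀ then σ j₀ + s else if i = i₀ then σ i₀ - s else σ i := by
        intro i
        rcases eq_or_ne i j₀ with rfl | hij₀
        · simp [hσ'']
        rcases eq_or_ne i i₀ with rfl | hii₀
        · simp [hσ'', hij₀, Function.update_of_ne hij₀, hij]
        · simp only [hσ'', Function.update_of_ne hij₀, Function.update_of_ne hii₀,
            if_neg hij₀, if_neg hii₀]
      have hsum_split : ∀ τ : Fin m → ℝ, ∑ i, τ i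
          = τ j₀ + (τ i₀ + ∑ i ∈ (Finset.univ.erase j₀).erase i₀, τ i) := by
        intro τ
        rw [← Finset.add_sum_erase _ _ (Finset.mem_univ j₀),
          ← Finset.add_sum_erase _ _ (Finset.mem_erase.mpr ⟨hij, Finset.mem_univ i₀⟩)]
      have hrest' : ∀ i ∈ (Finset.univ.erase j₀).erase i₀, σ' i = σ i := by
        intro i hi
        obtain ⟨hii, hij'⟩ := Finset.mem_erase.mp hi
        have hij'' := (Finset.mem_erase.mp hij').1
        rw [hval', if_neg hij'', if_neg hii]
      have hrest'' : ∀ i ∈ (Finset.univ.erase j₀).erase i₀, σ'' i = σ i := by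
        intro i hi
        obtain ⟨hii, hij'⟩ := Finset.mem_erase.mp hi
        have hij'' := (Finset.mem_erase.mp hij').1
        rw [hval'', if_neg hij'', if_neg hii]
      have hsum' : ∑ i, σ' i = ∑ i, σ i := by
        rw [hsum_split σ', hsum_split σ, Finset.sum_congr rfl hrest',
          hval' j₀, hval' i₀, if_pos rfl, if_neg hij, if_pos rfl]
        ring
      have hsum'' : ∑ i, σ'' i = ∑ i, σ i := by
        rw [hsum_split σ'', hsum_split σ, Finset.sum_congr rfl hrest'',
          hval'' j₀, hval'' i₀, if_pos rfl, if_neg hij, if_pos rfl]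
        ring
      have hfr : ∀ τ : Fin m → ℝ, (∀ i, τ i = σ i ∨ i = i₀ ∨ i = j₀) →
          (Finset.univ.filter fun i => τ i ≠ 0 ∧ τ i ≠ 1)
            ⊆ Finset.univ.filter fun i => σ i ≠ 0 ∧ σ i ≠ 1 := by
        intro τ hτ i hi
        rcases hτ i with h | rfl | rfl
        · refine Finset.mem_filter.mpr ⟨Finset.mem_univ _, ?_⟩
          have := (Finset.mem_filter.mp hi).2
          rwa [h] at this
        · exact hi₀
        · exact hj₀
      have hcard' : (Finset.univ.filter fun i => σ' i ≠ 0 ∧ σ' i ≠ 1).card ≤ N := by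
        have hsub := hfr σ' (fun i => by
          rcases eq_or_ne i j₀ with rfl | hij₀
          · right; right; rfl
          rcases eq_or_ne i i₀ with rfl | hii₀
          · right; left; rfl
          · left; rw [hval', if_neg hij₀, if_neg hii₀])
        have hneq : (Finset.univ.filter fun i => σ' i ≠ 0 ∧ σ' i ≠ 1)
            ≠ Finset.univ.filter fun i => σ i ≠ 0 ∧ σ i ≠ 1 := by
          intro heq
          rcases min_cases (1 - σ i₀) (σ j₀) with ⟨hmin, _⟩ | ⟨hmin, _⟩
          · have : σ' i₀ = 1 := by rw [hval', if_neg hij, if_pos rfl, htdef, hmin]; ring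
            have hnot : i₀ ∉ Finset.univ.filter fun i => σ' i ≠ 0 ∧ σ' i ≠ 1 := by
              simp [this]
            rw [heq] at hnot
            exact hnot hi₀
          · have : σ' j₀ = 0 := by rw [hval', if_pos rfl, htdef, hmin]; ring
            have hnot : j₀ ∉ Finset.univ.filter fun i => σ' i ≠ 0 ∧ σ' i ≠ 1 := by
              simp [this]
            rw [heq] at hnot
            exact hnot hj₀
        have := Finset.card_lt_card (lt_of_le_of_ne hsub hneq)
        omega
      have hcard'' : (Finset.univ.filter fun i => σ'' i ≠ 0 ∧ σ'' i ≠ 1).card ≤ N := by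
        have hsub := hfr σ'' (fun i => by
          rcases eq_or_ne i j₀ with rfl | hij₀
          · right; right; rfl
          rcases eq_or_ne i i₀ with rfl | hii₀
          · right; left; rfl
          · left; rw [hval'', if_neg hij₀, if_neg hii₀])
        have hneq : (Finset.univ.filter fun i => σ'' i ≠ 0 ∧ σ'' i ≠ 1)
            ≠ Finset.univ.filter fun i => σ i ≠ 0 ∧ σ i ≠ 1 := by
          intro heq
          rcases min_cases (σ i₀) (1 - σ j₀) with ⟨hmin, _⟩ | ⟨hmin, _⟩
          · have : σ'' i₀ = 0 := by rw [hval'', if_neg hij, if_pos rfl, hsdef, hmin]; ring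
            have hnot : i₀ ∉ Finset.univ.filter fun i => σ'' i ≠ 0 ∧ σ'' i ≠ 1 := by
              simp [this]
            rw [heq] at hnot
            exact hnot hi₀
          · have : σ'' j₀ = 1 := by rw [hval'', if_pos rfl, hsdef, hmin]; ring
            have hnot : j₀ ∉ Finset.univ.filter fun i => σ'' i ≠ 0 ∧ σ'' i ≠ 1 := by
              simp [this]
            rw [heq] at hnot
            exact hnot hj₀
        have := Finset.card_lt_card (lt_of_le_of_ne hsub hneq)
        omega
      have hmem' : σ' ∈ convexHull ℝ (Vert r Z) := by
        apply ih σ' hcard'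
        · intro i
          rw [hval']
          split
          · have : t ≤ σ j₀ := min_le_right _ _
            linarith
          split
          · linarith [h0 i₀, le_of_lt ht0]
          · exact h0 i
        · intro i
          rw [hval']
          split
          · linarith [h1 j₀, le_of_lt ht0]
          split
          · have : t ≤ 1 - σ i₀ := min_le_left _ _
            linarith
          · exact h1 i
        · rw [hsum']; exact hs
        · intro i hiZ
          have h1 : i ≠ j₀ := by rintro rfl; exact hj₀Z hiZ
          have h2 : i ≠ i₀ := by rintro rfl; exact hi₀Z hiZ
          rw [hval', if_neg h1, if_neg h2]
          exact hZ i hiZ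
      have hmem'' : σ'' ∈ convexHull ℝ (Vert r Z) := by
        apply ih σ'' hcard''
        · intro i
          rw [hval'']
          split
          · linarith [h0 j₀, le_of_lt hs0]
          split
          · have : s ≤ σ i₀ := min_le_left _ _
            linarith
          · exact h0 i
        · intro i
          rw [hval'']
          split
          · have : s ≤ 1 - σ j₀ := min_le_right _ _
            linarith
          split
          · linarith [h1 i₀, le_of_lt hs0]
          · exact h1 i
        · rw [hsum'']; exact hs
        · intro i hiZ
          have h1 : i ≠ j₀ := by rintro rfl; exact hj₀Z hiZ
          have h2 : i ≠ i₀ := by rintro rfl; exact hi₀Z hiZ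
          rw [hval'', if_neg h1, if_neg h2]
          exact hZ i hiZ
      have hst : 0 < s + t := by linarith
      have hcomb : (s / (s + t)) • σ' + (t / (s + t)) • σ'' = σ := by
        funext i
        simp only [Pi.add_apply, Pi.smul_apply, smul_eq_mul]
        rw [hval', hval'']
        rcases eq_or_ne i j₀ with rfl | hij₀
        · rw [if_pos rfl, if_pos rfl]; field_simp; ring
        rcases eq_or_ne i i₀ with rfl | hii₀
        · rw [if_neg hij₀, if_neg hij₀, if_pos rfl, if_pos rfl]; field_simp; ring
        · rw [if_neg hij₀, if_neg hij₀, if_neg hii₀, if_neg hii₀]; field_simp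
      rw [← hcomb]
      exact (convex_convexHull ℝ (Vert r Z)) hmem' hmem''
        (div_nonneg (le_of_lt hs0) (le_of_lt hst)) (div_nonneg (le_of_lt ht0) (le_of_lt hst))
        (by field_simp)
    · -- exactly one fractional coordinate i₀
      push_neg at hex
      have hothers : ∀ j, j ≠ i₀ → σ j = 0 ∨ σ j = 1 := by
        intro j hj
        by_contra hn
        push_neg at hn
        exact hj (hex j (Finset.mem_filter.mpr ⟨Finset.mem_univ _, hn⟩))
      set K := ((Finset.univ.erase i₀).filter fun j => σ j = 1).card with hK
      have hKsum : ∑ j ∈ Finset.univ.erase i₀, σ j = (K : ℝ) := by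
        rw [hK, ← Finset.sum_boole]
        refine Finset.sum_congr rfl fun j hj => ?_
        rcases hothers j (Finset.mem_erase.mp hj).1 with h | h <;> simp [h]
      have htot : ∑ i, σ i = σ i₀ + (K : ℝ) := by
        rw [← Finset.add_sum_erase _ _ (Finset.mem_univ i₀), hKsum]
      have hKr : (K : ℝ) + 1 ≤ (r : ℝ) := by
        have hKlt : (K : ℝ) < (r : ℝ) := by rw [htot] at hs; linarith
        have : K < r := by exact_mod_cast hKlt
        exact_mod_cast this
      set σ₀ := Function.update σ i₀ (0 : ℝ) with hσ₀
      set σ₁ := Function.update σ i₀ (1 : ℝ) with hσ₁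
      have hmem₀ : σ₀ ∈ Vert r Z := by
        refine ⟨fun i => ?_, ?_, fun i hiZ => ?_⟩
        · rcases eq_or_ne i i₀ with rfl | hii
          · left; simp [hσ₀]
          · rw [hσ₀, Function.update_of_ne hii]; exact hothers i hii
        · rw [Finset.sum_update_of_mem (Finset.mem_univ i₀), ← Finset.erase_eq, hKsum]
          linarith
        · rcases eq_or_ne i i₀ with rfl | hii
          · simp [hσ₀]
          · rw [hσ₀, Function.update_of_ne hii]; exact hZ i hiZ
      have hmem₁ : σ₁ ∈ Vert r Z := by
        refine ⟨fun i => ?_, ?_, fun i hiZ => ?_⟩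
        · rcases eq_or_ne i i₀ with rfl | hii
          · right; simp [hσ₁]
          · rw [hσ₁, Function.update_of_ne hii]; exact hothers i hii
        · rw [Finset.sum_update_of_mem (Finset.mem_univ i₀), ← Finset.erase_eq, hKsum]
          linarith
        · rcases eq_or_ne i i₀ with rfl | hii
          · exact absurd hiZ hi₀Z
          · rw [hσ₁, Function.update_of_ne hii]; exact hZ i hiZ
      have hcomb : (1 - σ i₀) • σ₀ + (σ i₀) • σ₁ = σ := by
        funext i
        simp only [Pi.add_apply, Pi.smul_apply, smul_eq_mul]
        rcases eq_or_ne i i₀ with rfl | hii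
        · simp [hσ₀, hσ₁]
        · rw [hσ₀, hσ₁, Function.update_of_ne hii, Function.update_of_ne hii]; ring
      rw [← hcomb]
      exact (convex_convexHull ℝ (Vert r Z)) (subset_convexHull ℝ _ hmem₀)
        (subset_convexHull ℝ _ hmem₁) (by linarith) (le_of_lt hpos) (by ring)

end Polytope
section VertexMatrix
variable {p m r : ℕ}

/-- extend a partial orthonormal family (indexed by an initial segment) to
orthonormal columns -/
lemma exists_cols {q : ℕ} {k : ℕ} (hkr : k ≤ r) (hrq : r ≤ q)
    (w : Fin k → Fin q → ℝ)
    (hw : ∀ a b : Fin k, w a ⬝ᵥ w b = if a = b then 1 else 0) :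
    ∃ col : Fin r → Fin q → ℝ,
      (∀ t t', col t ⬝ᵥ col t' = if t = t' then 1 else 0) ∧
      ∀ (t : Fin r) (ht : (t : ℕ) < k), col t = w ⟨t, ht⟩ := by
  classical
  set fam : Fin q → EuclideanSpace ℝ (Fin q) :=
    fun j => if h : (j : ℕ) < k then (WithLp.equiv 2 (Fin q → ℝ)).symm (w ⟨j, h⟩) else 0
    with hfam
  set sA : Set (Fin q) := {j | (j : ℕ) < k} with hsA
  have hon : Orthonormal ℝ (sA.restrict fam) := by
    rw [orthonormal_iff_ite]
    intro a b
    have ha : ((a : Fin q) : ℕ) < k := a.2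
    have hb : ((b : Fin q) : ℕ) < k := b.2
    show inner ℝ (fam a) (fam b) = _
    rw [hfam]
    simp only [dif_pos ha, dif_pos hb]
    rw [inner_eq_dot]
    have : ⇑((WithLp.equiv 2 (Fin q → ℝ)).symm (w ⟨(a : Fin q), ha⟩)) ⬝ᵥ
        ⇑((WithLp.equiv 2 (Fin q → ℝ)).symm (w ⟨(b : Fin q), hb⟩))
        = w ⟨(a : Fin q), ha⟩ ⬝ᵥ w ⟨(b : Fin q), hb⟩ := rfl
    rw [this, hw]
    by_cases hab : a = b
    · subst hab; simp
    · have h1 : (⟨(a : Fin q), ha⟩ : Fin k) ≠ ⟨(b : Fin q), hb⟩ := by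
        intro h
        apply hab
        have h2 := congrArg Fin.val h
        exact Subtype.ext (Fin.ext h2)
      rw [if_neg h1, if_neg hab]
  obtain ⟨bA, hbA⟩ := hon.exists_orthonormalBasis_extension_of_card_eq
    (by simp : Module.finrank ℝ (EuclideanSpace ℝ (Fin q)) = Fintype.card (Fin q))
  refine ⟨fun t => ⇑(bA (Fin.castLE hrq t)), fun t t' => ?_, fun t ht => ?_⟩
  · have h := orthonormal_iff_ite.mp bA.orthonormal (Fin.castLE hrq t) (Fin.castLE hrq t')
    rw [inner_eq_dot] at h
    rw [h]
    by_cases htt : t = t'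
    · subst htt; simp
    · rw [if_neg (fun hc => htt (Fin.castLE_injective hrq hc)), if_neg htt]
  · have hmem : Fin.castLE hrq t ∈ sA := ht
    have hbam := hbA _ hmem
    simp only [hbam, hfam]
    rw [dif_pos (show ((Fin.castLE hrq t : Fin q) : ℕ) < k from ht)]
    rfl

lemma vertex_matrix_mem (hrp : r ≤ p) (hrm : r ≤ m)
    (u : Fin m → Fin p → ℝ) (v : Fin m → Fin m → ℝ) (S : Finset (Fin m))
    (hcard : S.card ≤ r)
    (hu : ∀ i ∈ S, ∀ j ∈ S, u i ⬝ᵥ u j = if i = j then 1 else 0)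
    (hv : ∀ i ∈ S, ∀ j ∈ S, v i ⬝ᵥ v j = if i = j then 1 else 0) :
    (∑ i ∈ S, Matrix.vecMulVec (u i) (v i)) ∈ convexHull ℝ
      {G : Matrix (Fin p) (Fin m) ℝ |
        ∃ (A : Matrix (Fin p) (Fin r) ℝ) (B : Matrix (Fin m) (Fin r) ℝ),
          Aᵀ * A = 1 ∧ Bᵀ * B = 1 ∧ G = A * Bᵀ} := by
  classical
  set k := S.card with hk
  set e : Fin k ≃o {x // x ∈ S} := S.orderIsoOfFin rfl with he
  have hedot_u : ∀ a b : Fin k, u (e a) ⬝ᵥ u (e b) = if a = b then 1 else 0 := by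
    intro a b
    rw [hu _ (e a).2 _ (e b).2]
    by_cases hab : a = b
    · subst hab; simp
    · rw [if_neg (fun hc => hab (e.injective (Subtype.ext hc))), if_neg hab]
  have hedot_v : ∀ a b : Fin k, v (e a) ⬝ᵥ v (e b) = if a = b then 1 else 0 := by
    intro a b
    rw [hv _ (e a).2 _ (e b).2]
    by_cases hab : a = b
    · subst hab; simp
    · rw [if_neg (fun hc => hab (e.injective (Subtype.ext hc))), if_neg hab]
  obtain ⟨colA, hAdot, hAval⟩ := exists_cols (q := p) hcard hrp (fun a => u (e a)) hedot_u
  obtain ⟨colB, hBdot, hBval⟩ := exists_cols (q := m) hcard hrm (fun a => v (e a)) hedot_v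
  set A : Matrix (Fin p) (Fin r) ℝ := Matrix.of fun i t => colA t i with hA
  set B : Matrix (Fin m) (Fin r) ℝ := Matrix.of fun i t => colB t i with hB
  set ε : Fin r → ℝ := fun t => if (t : ℕ) < k then 1 else -1 with hε
  set B' : Matrix (Fin m) (Fin r) ℝ := Matrix.of fun i t => ε t * colB t i with hB'
  have hAorth : Aᵀ * A = 1 := by
    ext t t'
    rw [Matrix.mul_apply, Matrix.one_apply]
    calc ∑ i, Aᵀ t i * A i t' = colA t ⬝ᵥ colA t' := rfl
      _ = _ := hAdot t t'
  have hBorth : Bᵀ * B = 1 := by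
    ext t t'
    rw [Matrix.mul_apply, Matrix.one_apply]
    calc ∑ i, Bᵀ t i * B i t' = colB t ⬝ᵥ colB t' := rfl
      _ = _ := hBdot t t'
  have hB'orth : B'ᵀ * B' = 1 := by
    ext t t'
    rw [Matrix.mul_apply, Matrix.one_apply]
    have : ∑ i, B'ᵀ t i * B' i t' = (ε t * ε t') * (colB t ⬝ᵥ colB t') := by
      rw [dotProduct, Finset.mul_sum]
      refine Finset.sum_congr rfl fun i _ => ?_
      show ε t * colB t i * (ε t' * colB t' i) = ε t * ε t' * (colB t i * colB t' i)
      ring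
    rw [this, hBdot]
    by_cases htt : t = t'
    · subst htt
      simp only [if_pos rfl, mul_one, hε]
      by_cases hlt : (t : ℕ) < k <;> simp [hlt]
    · simp [htt]
  have hcomb : (1/2 : ℝ) • (A * Bᵀ) + (1/2 : ℝ) • (A * B'ᵀ)
      = ∑ i ∈ S, Matrix.vecMulVec (u i) (v i) := by
    ext j l
    have hABe : (A * Bᵀ) j l = ∑ t, colA t j * colB t l := by
      rw [Matrix.mul_apply]; rfl
    have hAB'e : (A * B'ᵀ) j l = ∑ t, colA t j * (ε t * colB t l) := by
      rw [Matrix.mul_apply]; rfl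
    have hhalf : (1/2 : ℝ) * (A * Bᵀ) j l + (1/2 : ℝ) * (A * B'ᵀ) j l
        = ∑ t : Fin r, (if (t : ℕ) < k then colA t j * colB t l else 0) := by
      rw [hABe, hAB'e, Finset.mul_sum, Finset.mul_sum, ← Finset.sum_add_distrib]
      refine Finset.sum_congr rfl fun t _ => ?_
      rw [hε]
      by_cases hlt : (t : ℕ) < k <;> simp [hlt] <;> ring
    have hstep : ∑ t : Fin r, (if (t : ℕ) < k then colA t j * colB t l else 0)
        = ∑ a : Fin k, u (e a) j * v (e a) l := by
      have hite : ∀ t : Fin r, (if (t : ℕ) < k then colA t j * colB t l else 0)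
          = (if h : (t : ℕ) < k then u (e ⟨t, h⟩) j * v (e ⟨t, h⟩) l else 0) := by
        intro t
        by_cases hlt : (t : ℕ) < k
        · rw [if_pos hlt, dif_pos hlt, hAval t hlt, hBval t hlt]
        · rw [if_neg hlt, dif_neg hlt]
      rw [Finset.sum_congr rfl fun t _ => hite t]
      have F : ℕ → ℝ := fun n => if h : n < k then u (e ⟨n, h⟩) j * v (e ⟨n, h⟩) l else 0
      calc ∑ t : Fin r, (if h : (t : ℕ) < k then u (e ⟨t, h⟩) j * v (e ⟨t, h⟩) l else 0)
          = ∑ n ∈ Finset.range r,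
              (if h : n < k then u (e ⟨n, h⟩) j * v (e ⟨n, h⟩) l else 0) :=
            Fin.sum_univ_eq_sum_range
              (fun n => if h : n < k then u (e ⟨n, h⟩) j * v (e ⟨n, h⟩) l else 0) r
        _ = ∑ n ∈ Finset.range k,
              (if h : n < k then u (e ⟨n, h⟩) j * v (e ⟨n, h⟩) l else 0) := by
            refine (Finset.sum_subset (Finset.range_subset_range.mpr hcard) ?_).symm
            intro n _ hnk
            exact dif_neg (fun h => hnk (Finset.mem_range.mpr h))
        _ = ∑ a : Fin k, u (e a) j * v (e a) l := by
            rw [← Fin.sum_univ_eq_sum_range]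
            refine Finset.sum_congr rfl fun a _ => ?_
            rw [dif_pos a.2]
    calc ((1/2 : ℝ) • (A * Bᵀ) + (1/2 : ℝ) • (A * B'ᵀ)) j l
        = (1/2 : ℝ) * (A * Bᵀ) j l + (1/2 : ℝ) * (A * B'ᵀ) j l := rfl
      _ = ∑ t : Fin r, (if (t : ℕ) < k then colA t j * colB t l else 0) := hhalf
      _ = ∑ a : Fin k, u (e a) j * v (e a) l := hstep
      _ = ∑ i ∈ S, u i j * v i l := by
          rw [show (∑ a : Fin k, u (e a) j * v (e a) l)
              = ∑ x : {x // x ∈ S}, u (x : Fin m) j * v (x : Fin m) l from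
            Equiv.sum_comp e.toEquiv (fun x => u (x : Fin m) j * v (x : Fin m) l)]
          exact Finset.sum_coe_sort S (fun i => u i j * v i l)
      _ = (∑ i ∈ S, Matrix.vecMulVec (u i) (v i)) j l := by
          rw [Matrix.sum_apply]
          exact Finset.sum_congr rfl fun i _ => rfl
  rw [← hcomb]
  have hmem1 : (A * Bᵀ) ∈ {G : Matrix (Fin p) (Fin m) ℝ |
      ∃ (A₀ : Matrix (Fin p) (Fin r) ℝ) (B₀ : Matrix (Fin m) (Fin r) ℝ),
        A₀ᵀ * A₀ = 1 ∧ B₀ᵀ * B₀ = 1 ∧ G = A₀ * B₀ᵀ} := ⟨A, B, hAorth, hBorth, rfl⟩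
  have hmem2 : (A * B'ᵀ) ∈ {G : Matrix (Fin p) (Fin m) ℝ |
      ∃ (A₀ : Matrix (Fin p) (Fin r) ℝ) (B₀ : Matrix (Fin m) (Fin r) ℝ),
        A₀ᵀ * A₀ = 1 ∧ B₀ᵀ * B₀ = 1 ∧ G = A₀ * B₀ᵀ} := ⟨A, B', hAorth, hB'orth, rfl⟩
  exact (convex_convexHull ℝ _) (subset_convexHull ℝ _ hmem1) (subset_convexHull ℝ _ hmem2)
    (by norm_num) (by norm_num) (by norm_num)

end VertexMatrix
end Stmt14

open Stmt14 in
/-- Provided `r ≤ min(p,m)`, the set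
`C_r = {G : ‖G‖_* ≤ r, ‖G‖_op ≤ 1}` is the convex hull of
`O_r = {AB' : A ∈ O(p,r), B ∈ O(m,r)}`. -/
theorem stmt14 {p m r : ℕ} (hrp : r ≤ p) (hrm : r ≤ m) :
    convexHull ℝ {G : Matrix (Fin p) (Fin m) ℝ |
        ∃ (A : Matrix (Fin p) (Fin r) ℝ) (B : Matrix (Fin m) (Fin r) ℝ),
          Aᵀ * A = 1 ∧ Bᵀ * B = 1 ∧ G = A * Bᵀ}
      = {G : Matrix (Fin p) (Fin m) ℝ | nucNorm G ≤ (r : ℝ) ∧ opNorm G ≤ 1} := by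
  classical
  apply Set.Subset.antisymm
  · -- easy direction
    intro G hG
    rw [convexHull_eq] at hG
    obtain ⟨ι, t, w, z, hw0, hw1, hz, hcm⟩ := hG
    rw [Finset.centerMass_eq_of_sum_1 _ _ hw1] at hcm
    have hzO : ∀ k ∈ t, ∃ (A : Matrix (Fin p) (Fin r) ℝ) (B : Matrix (Fin m) (Fin r) ℝ),
        Aᵀ * A = 1 ∧ Bᵀ * B = 1 ∧ z k = A * Bᵀ := hz
    constructor
    · exact nucNorm_le_of_combination G t w z hw0 hw1 hzO hcm
    · have hsv := opNorm_le_of_combination G t w z hw0 hw1 hzO hcm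
      exact Real.iSup_le hsv zero_le_one
  · -- hard direction
    intro G hG
    obtain ⟨hnuc, hop⟩ := hG
    have h0 : ∀ i, 0 ≤ singVals G i := sv_nonneg G
    have h1 : ∀ i, singVals G i ≤ 1 := by
      intro i
      have hb : singVals G i ≤ opNorm G :=
        le_ciSup (Set.Finite.bddAbove (Set.finite_range (singVals G))) i
      exact hb.trans hop
    set Z : Finset (Fin m) := Finset.univ.filter fun i => singVals G i = 0 with hZdef
    have hσmem : singVals G ∈ convexHull ℝ (Vert r Z) := by
      refine polytope Z ((Finset.univ.filter fun i => singVals G i ≠ 0 ∧ singVals G i ≠ 1).card)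
        (singVals G) le_rfl h0 h1 hnuc ?_
      intro i hi
      exact (Finset.mem_filter.mp hi).2
    set Φ : (Fin m → ℝ) →ₗ[ℝ] Matrix (Fin p) (Fin m) ℝ :=
      { toFun := fun c => ∑ i, c i • Matrix.vecMulVec (U G i) (V G i)
        map_add' := by
          intro x y
          simp only [Pi.add_apply, add_smul, Finset.sum_add_distrib]
        map_smul' := by
          intro c x
          simp only [Pi.smul_apply, smul_eq_mul, RingHom.id_apply, Finset.smul_sum, smul_smul] }
      with hΦdef
    have hGeq : G = Φ (singVals G) := H_eq G
    have himage : Φ '' (Vert r Z) ⊆ convexHull ℝ {G : Matrix (Fin p) (Fin m) ℝ |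
        ∃ (A : Matrix (Fin p) (Fin r) ℝ) (B : Matrix (Fin m) (Fin r) ℝ),
          Aᵀ * A = 1 ∧ Bᵀ * B = 1 ∧ G = A * Bᵀ} := by
      rintro _ ⟨c, hc, rfl⟩
      obtain ⟨hc01, hcsum, hcZ⟩ := hc
      set Sc : Finset (Fin m) := Finset.univ.filter fun i => c i = 1 with hScdef
      have hΦc : Φ c = ∑ i ∈ Sc, Matrix.vecMulVec (U G i) (V G i) := by
        show (∑ i, c i • Matrix.vecMulVec (U G i) (V G i)) = _
        rw [← Finset.sum_filter_add_sum_filter_not Finset.univ (fun i => c i = 1)]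
        have hfirst : ∑ i ∈ Finset.univ.filter (fun i => c i = 1),
            c i • Matrix.vecMulVec (U G i) (V G i)
            = ∑ i ∈ Sc, Matrix.vecMulVec (U G i) (V G i) := by
          refine Finset.sum_congr rfl fun i hi => ?_
          rw [(Finset.mem_filter.mp hi).2, one_smul]
        have hsecond : ∑ i ∈ Finset.univ.filter (fun i => ¬ c i = 1),
            c i • Matrix.vecMulVec (U G i) (V G i) = 0 := by
          refine Finset.sum_eq_zero fun i hi => ?_
          have := (Finset.mem_filter.mp hi).2
          rcases hc01 i with h | h
          · rw [h, zero_smul]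
          · exact absurd h this
        rw [hfirst, hsecond, add_zero]
      have hcount : (Sc.card : ℝ) ≤ (r : ℝ) := by
        have : ∑ i, c i = (Sc.card : ℝ) := by
          rw [← Finset.sum_boole]
          refine Finset.sum_congr rfl fun i _ => ?_
          rcases hc01 i with h | h <;> simp [h]
        linarith [hcsum, this.symm.le]
      have hScard : Sc.card ≤ r := by exact_mod_cast hcount
      have hSne : ∀ i ∈ Sc, singVals G i ≠ 0 := by
        intro i hi hzero
        have hiZ : i ∈ Z := Finset.mem_filter.mpr ⟨Finset.mem_univ _, hzero⟩
        have := hcZ i hiZ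
        rw [(Finset.mem_filter.mp hi).2] at this
        norm_num at this
      rw [hΦc]
      exact vertex_matrix_mem hrp hrm (U G) (V G) Sc hScard
        (fun i hi j hj => U_dot G (hSne i hi) (hSne j hj))
        (fun i _ j _ => V_dot G i j)
    have hsub : convexHull ℝ (Φ '' (Vert r Z)) ⊆ convexHull ℝ
        {G : Matrix (Fin p) (Fin m) ℝ |
          ∃ (A : Matrix (Fin p) (Fin r) ℝ) (B : Matrix (Fin m) (Fin r) ℝ),
            Aᵀ * A = 1 ∧ Bᵀ * B = 1 ∧ G = A * Bᵀ} :=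
      convexHull_min himage (convex_convexHull ℝ _)
    have hin : Φ (singVals G) ∈ convexHull ℝ (Φ '' (Vert r Z)) := by
      rw [← LinearMap.image_convexHull]
      exact Set.mem_image_of_mem _ hσmem
    rw [hGeq]
    exact hsub hin
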